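/- Let φ = f + g with f : ℝⁿ → ℝ differentiable and g : ℝⁿ → ℝ ∪ {∞} proper, lsc, convex. Suppose xᵏ = prox_{γₖ g}(xᵏ⁻¹ − γₖ∇f(xᵏ⁻¹)) with γₖ > 0, and let ℓₖ = ⟨∇f(xᵏ) − ∇f(xᵏ⁻¹), xᵏ − xᵏ⁻¹⟩/‖xᵏ − xᵏ⁻¹‖². Then φ(xᵏ⁻¹) − φ(xᵏ) ≥ ((1 − γₖℓₖ)/γₖ)‖xᵏ − xᵏ⁻¹‖². -/

import Mathlib

open scoped RealInnerProductSpace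

noncomputable section

def EProper {n : ℕ} (g : EuclideanSpace ℝ (Fin n) → EReal) : Prop :=
  (∀ x, g x ≠ ⊥) ∧ ∃ x, g x ≠ ⊤

def EConvexOn {n : ℕ} (g : EuclideanSpace ℝ (Fin n) → EReal) : Prop :=
  ∀ x y : EuclideanSpace ℝ (Fin n), ∀ a b : ℝ, 0 ≤ a → 0 ≤ b → a + b = 1 →
    g (a • x + b • y) ≤ (a : EReal) * g x + (b : EReal) * g y

def IsProx {n : ℕ} (g : EuclideanSpace ℝ (Fin n) → EReal) (γ : ℝ)
    (y p : EuclideanSpace ℝ (Fin n)) : Prop :=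
  ∀ z, g p + ((1 / (2 * γ) * ‖p - y‖ ^ 2 : ℝ) : EReal)
      ≤ g z + ((1 / (2 * γ) * ‖z - y‖ ^ 2 : ℝ) : EReal)

/-- Gradient inequality for a differentiable convex function. -/
lemma grad_ineq_aux {n : ℕ} (f : EuclideanSpace ℝ (Fin n) → ℝ) (hf : Differentiable ℝ f)
    (hfc : ConvexOn ℝ Set.univ f) (x y : EuclideanSpace ℝ (Fin n)) :
    f x + ⟪gradient f x, y - x⟫ ≤ f y := by
  set h : ℝ → ℝ := f ∘ (AffineMap.lineMap x y) with hh
  have hconv : ConvexOn ℝ Set.univ h := by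
    have := hfc.comp_affineMap (AffineMap.lineMap x y : ℝ →ᵃ[ℝ] EuclideanSpace ℝ (Fin n))
    simpa using this
  have hline : HasDerivAt (fun t : ℝ => AffineMap.lineMap x y t) (y - x) 0 := by
    have : (fun t : ℝ => AffineMap.lineMap x y t) = fun t : ℝ => t • (y - x) + x := by
      funext t; simp [AffineMap.lineMap_apply_module]; module
    rw [this]
    simpa using (((hasDerivAt_id (0:ℝ)).smul_const (y - x)).add_const x)
  have hg : HasGradientAt f (gradient f x) x := (hf x).hasGradientAt
  have hderiv : HasDerivAt h ⟪gradient f x, y - x⟫ 0 := by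
    have hx0 : (AffineMap.lineMap x y : ℝ → _) 0 = x := by simp
    have := (hx0 ▸ hg.hasFDerivAt).comp_hasDerivAt 0 hline
    simpa [hh, InnerProductSpace.toDual_apply_apply] using this
  have := hconv.le_slope_of_hasDerivAt (Set.mem_univ 0) (Set.mem_univ 1) zero_lt_one hderiv
  rw [slope_def_field] at this
  have h0 : h 0 = f x := by simp [hh]
  have h1 : h 1 = f y := by simp [hh]
  rw [h0, h1, show (1:ℝ) - 0 = 1 by norm_num, div_one] at this
  linarith

/-- Sufficient-decrease inequality for a proximal gradient step:
`φ(xᵏ⁻¹) - φ(xᵏ) ≥ ((1 - γₖℓₖ)/γₖ)‖xᵏ - xᵏ⁻¹‖²`, stated additively as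
`φ(xᵏ) + ((1 - γₖℓₖ)/γₖ)‖xᵏ - xᵏ⁻¹‖² ≤ φ(xᵏ⁻¹)`. -/
theorem stmt3 {n : ℕ} (f : EuclideanSpace ℝ (Fin n) → ℝ)
    (hf : Differentiable ℝ f) (hfc : ConvexOn ℝ Set.univ f)
    (g : EuclideanSpace ℝ (Fin n) → EReal)
    (hgp : EProper g) (hglsc : LowerSemicontinuous g) (hgc : EConvexOn g)
    (φ : EuclideanSpace ℝ (Fin n) → EReal)
    (hφ : φ = fun z => (f z : EReal) + g z)
    (γk : ℝ) (hγk : 0 < γk)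
    (xkm1 xk : EuclideanSpace ℝ (Fin n))
    (hprox : IsProx g γk (xkm1 - γk • gradient f xkm1) xk)
    (ℓk : ℝ)
    (hℓk : ℓk = ⟪gradient f xk - gradient f xkm1, xk - xkm1⟫ / ‖xk - xkm1‖ ^ 2) :
    φ xk + (((1 - γk * ℓk) / γk * ‖xk - xkm1‖ ^ 2 : ℝ) : EReal) ≤ φ xkm1 := by
  have hγne : γk ≠ 0 := ne_of_gt hγk
  set u := gradient f xkm1 with hu
  set w := gradient f xk with hw
  set yv := xkm1 - γk • u with hyv
  set d := xk - xkm1 with hd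
  -- g xk is finite
  have hkbot := hgp.1 xk
  have hktop : g xk ≠ ⊤ := by
    obtain ⟨z₀, hz₀top⟩ := hgp.2
    have hz₀bot := hgp.1 z₀
    intro htop
    have hp := hprox z₀
    rw [htop, EReal.top_add_coe] at hp
    rw [top_le_iff] at hp
    rw [← EReal.coe_toReal hz₀top hz₀bot, ← EReal.coe_add] at hp
    exact EReal.coe_ne_top _ hp
  set b := (g xk).toReal with hbdef
  have hb : g xk = (b : EReal) := (EReal.coe_toReal hktop hkbot).symm
  by_cases hm : g xkm1 = ⊤
  · rw [hφ]
    simp only [hm]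
    rw [EReal.add_top_of_ne_bot (EReal.coe_ne_bot (f xkm1))]
    exact le_top
  have hmbot := hgp.1 xkm1
  set a := (g xkm1).toReal with hadef
  have ha : g xkm1 = (a : EReal) := (EReal.coe_toReal hm hmbot).symm
  -- key parametrized inequality from prox + convexity of g
  have key : ∀ t : ℝ, 0 < t → t ≤ 1 →
      b - a ≤ (1/γk) * ⟪xk - yv, xkm1 - xk⟫ + (1/(2*γk)) * t * ‖d‖^2 := by
    intro t ht0 ht1
    have hcvx := hgc xkm1 xk t (1-t) ht0.le (by linarith) (by ring)
    rw [ha, hb, ← EReal.coe_mul, ← EReal.coe_mul, ← EReal.coe_add] at hcvx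
    have hp := hprox (t • xkm1 + (1-t) • xk)
    rw [hb] at hp
    have hchain : ((b : ℝ) : EReal) + ((1/(2*γk) * ‖xk - yv‖^2 : ℝ) : EReal)
        ≤ ((t*a + (1-t)*b + 1/(2*γk) * ‖(t • xkm1 + (1-t) • xk) - yv‖^2 : ℝ) : EReal) := by
      refine hp.trans ?_
      rw [EReal.coe_add]
      exact add_le_add_left hcvx _
    rw [← EReal.coe_add, EReal.coe_le_coe_iff] at hchain
    have hz : (t • xkm1 + (1-t) • xk) - yv = (xk - yv) + t • (xkm1 - xk) := by module
    rw [hz, norm_add_sq_real, real_inner_smul_right, norm_smul] at hchain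
    have hnorm : ‖xkm1 - xk‖ = ‖d‖ := by rw [hd, norm_sub_rev]
    rw [hnorm] at hchain
    have habs : |t| = t := abs_of_pos ht0
    rw [Real.norm_eq_abs, habs, mul_pow] at hchain
    -- hchain : b + c‖xk-yv‖² ≤ t a + (1-t) b + c(‖xk-yv‖² + 2 t P + t²‖d‖²)
    have hc : (0:ℝ) < 1/(2*γk) := by positivity
    -- divide by t
    have hmul : t * (b - a) ≤ t * ((1/γk) * ⟪xk - yv, xkm1 - xk⟫ + (1/(2*γk)) * t * ‖d‖^2) := by
      have expand : t * ((1/γk) * ⟪xk - yv, xkm1 - xk⟫ + (1/(2*γk)) * t * ‖d‖^2)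
          = 1/(2*γk) * (2 * (t * ⟪xk - yv, xkm1 - xk⟫) + t^2 * ‖d‖^2) := by
        field_simp
      rw [expand]
      have hdist : 1/(2*γk) * (‖xk - yv‖^2 + 2*(t*⟪xk - yv, xkm1 - xk⟫) + t^2*‖d‖^2)
          = 1/(2*γk)*‖xk - yv‖^2 + 1/(2*γk)*(2*(t*⟪xk - yv, xkm1 - xk⟫) + t^2*‖d‖^2) := by ring
      rw [hdist] at hchain
      linarith
    exact le_of_mul_le_mul_left (by linarith [hmul]) ht0
  -- pass to the limit t → 0⁺
  have hg1' : b - a ≤ (1/γk) * ⟪xk - yv, xkm1 - xk⟫ := by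
    refine le_of_forall_pos_le_add ?_
    intro ε hε
    set C : ℝ := (1/(2*γk)) * ‖d‖^2 with hC
    have hC0 : 0 ≤ C := by positivity
    set t : ℝ := min 1 (ε/(C+1)) with ht
    have ht0 : 0 < t := lt_min zero_lt_one (by positivity)
    have ht1 : t ≤ 1 := min_le_left _ _
    have hkey := key t ht0 ht1
    have hts : t ≤ ε/(C+1) := min_le_right _ _
    have : (1/(2*γk)) * t * ‖d‖^2 ≤ ε := by
      have h1 : t * C ≤ (ε/(C+1)) * C := by nlinarith
      have h2 : (ε/(C+1)) * C ≤ ε := by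
        rw [div_mul_eq_mul_div, div_le_iff₀ (by linarith)]
        nlinarith
      calc (1/(2*γk)) * t * ‖d‖^2 = t * C := by rw [hC]; ring
        _ ≤ ε := h1.trans h2
    linarith
  -- compute the inner product
  have hxy : xk - yv = d + γk • u := by rw [hyv, hd]; module
  have hP : ⟪xk - yv, xkm1 - xk⟫ = -‖d‖^2 - γk * ⟪u, d⟫ := by
    have hneg : xkm1 - xk = -d := by rw [hd]; module
    rw [hxy, hneg, inner_neg_right, inner_add_left, real_inner_smul_left,
      real_inner_self_eq_norm_sq]
    ring
  have hg1 : b + (1/γk) * ‖d‖^2 + ⟪u, d⟫ ≤ a := by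
    rw [hP] at hg1'
    have : (1/γk) * (-‖d‖^2 - γk * ⟪u, d⟫) = -(1/γk) * ‖d‖^2 - ⟪u, d⟫ := by
      field_simp
    rw [this] at hg1'
    linarith
  -- convexity of f
  have hf2 : f xk + ⟪w, xkm1 - xk⟫ ≤ f xkm1 := grad_ineq_aux f hf hfc xk xkm1
  have hf2' : f xk - ⟪w, d⟫ ≤ f xkm1 := by
    have hneg : xkm1 - xk = -d := by rw [hd]; module
    rw [hneg, inner_neg_right] at hf2
    linarith
  -- ℓk relation
  have hℓ : ℓk * ‖d‖^2 = ⟪w, d⟫ - ⟪u, d⟫ := by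
    rw [← inner_sub_left]
    by_cases hdz : d = 0
    · rw [hdz]; simp
    · have hdn : ‖d‖^2 ≠ 0 := pow_ne_zero 2 (norm_ne_zero_iff.mpr hdz)
      rw [hℓk, div_mul_cancel₀ _ hdn]
  -- conclude
  rw [hφ]
  simp only
  rw [hb, ha, ← EReal.coe_add, ← EReal.coe_add, ← EReal.coe_add, EReal.coe_le_coe_iff]
  have hcoef : (1 - γk * ℓk) / γk * ‖d‖^2 = (1/γk) * ‖d‖^2 - ℓk * ‖d‖^2 := by
    field_simp
  rw [hcoef, hℓ]
  linarith
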